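/- Suppose a sequence of distributions π_1, π_2, ..., π_T on a finite set Y satisfies the Hedge guarantee: (T/2) ≤ min_π [ (ηT/(1-e^{-η})) · P(π ≺ π̄_T) + KL(π ‖ π_0)/(1-e^{-η}) ], where π̄_T = (1/T)∑_t π_t and KL(π ‖ π_0) ≤ C for all π in the feasible set. Then with η = C/√T, the duality gap satisfies max_π P(π ≻ π̄_T) - min_π P(π ≺ π̄_T) = O(1/√T). -/
import Mathlib



/-- Probability distributions on a finite type `Y`. -/
def ProbDist (Y : Type*) [Fintype Y] : Type _ :=
  {π : Y → ℝ // (∀ y, 0 ≤ π y) ∧ ∑ y, π y = 1}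

/-- Win probability of mixed policy `μ` against `ν`. -/
noncomputable def winProb {Y : Type*} [Fintype Y] (P : Y → Y → ℝ)
    (μ ν : Y → ℝ) : ℝ :=
  ∑ y : Y, ∑ y' : Y, μ y * ν y' * P y y'

/-- KL divergence between two distributions on a finite type. -/
noncomputable def klDiv {Y : Type*} [Fintype Y] (π π₀ : Y → ℝ) : ℝ :=
  ∑ y : Y, π y * Real.log (π y / π₀ y)

/-- The average (mixture) policy `π̄_T = (1/T) ∑_{t<T} π_t`. -/
noncomputable def mixPolicy {Y : Type*} [Fintype Y] (T : ℕ) (πs : ℕ → Y → ℝ) : Y → ℝ :=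
  fun y => (1 / (T : ℝ)) * ∑ t ∈ Finset.range T, πs t y

set_option maxHeartbeats 1600000 in
/-- If the Hedge guarantee holds with `η = C/√T`, then the duality gap
of the mixture policy is `O(1/√T)`, with a constant depending only on `C`. -/
theorem hedge_implies_duality_gap (C : ℝ) (hC : 0 < C) :
    ∃ c : ℝ, 0 < c ∧
      ∀ (Y : Type) [Fintype Y] [Nonempty Y]
        (P : Y → Y → ℝ),
        (∀ y y' : Y, 0 ≤ P y y') → (∀ y y' : Y, P y y' ≤ 1) →
        (∀ y y' : Y, P y y' + P y' y = 1) →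
        ∀ (π₀ : ProbDist Y), (∀ y, 0 < π₀.1 y) →
        (∀ π : ProbDist Y, klDiv π.1 π₀.1 ≤ C) →
        ∀ (T : ℕ), 1 ≤ T →
        ∀ (πs : ℕ → ProbDist Y),
        (∀ π : ProbDist Y,
            (T : ℝ) / 2 ≤
              ((C / Real.sqrt T) * T / (1 - Real.exp (-(C / Real.sqrt T)))) *
                  (1 - winProb P π.1 (mixPolicy T (fun t => (πs t).1)))
                + klDiv π.1 π₀.1 / (1 - Real.exp (-(C / Real.sqrt T)))) →
        (⨆ π : ProbDist Y, winProb P π.1 (mixPolicy T (fun t => (πs t).1)))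
          - (⨅ π : ProbDist Y, (1 - winProb P π.1 (mixPolicy T (fun t => (πs t).1))))
          ≤ c / Real.sqrt T := by
  refine ⟨C + 2, by linarith, ?_⟩
  intro Y _ _ P hP0 hP1 hPsum π₀ hπ₀ hKL T hT πs hHedge
  haveI : Nonempty (ProbDist Y) := ⟨π₀⟩
  have hT0 : (0 : ℝ) < T := by exact_mod_cast Nat.lt_of_lt_of_le Nat.zero_lt_one hT
  set s := Real.sqrt (T : ℝ) with hs_def
  have hs : 0 < s := Real.sqrt_pos.2 hT0
  have hss : s * s = (T : ℝ) := Real.mul_self_sqrt hT0.le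
  set η := C / s with hη_def
  have hη : 0 < η := div_pos hC hs
  have hηs : η * s = C := div_mul_cancel₀ C hs.ne'
  set e := Real.exp (-η) with he_def
  have he0 : 0 < e := Real.exp_pos _
  have he1 : e < 1 := by
    rw [he_def]
    exact Real.exp_lt_one_iff.2 (by linarith)
  set D := 1 - e with hD_def
  have hD : 0 < D := by rw [hD_def]; linarith
  have hB : η ≤ (1 + η) * D := by
    have h1 : 1 + η ≤ Real.exp η := by have := Real.add_one_le_exp η; linarith
    have h2 : e * Real.exp η = 1 := by rw [he_def, ← Real.exp_add]; simp
    nlinarith [Real.exp_pos η]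
  clear_value s η e D
  -- key bound on the win probability of any policy against the mixture
  have key : ∀ π : ProbDist Y,
      winProb P π.1 (mixPolicy T (fun t => (πs t).1)) ≤ 1 / 2 + (C / 2 + 1) / s := by
    intro π
    set w := winProb P π.1 (mixPolicy T (fun t => (πs t).1)) with hw_def
    set K := klDiv π.1 π₀.1 with hK_def
    clear_value w K
    have hK : K ≤ C := hK_def ▸ hKL π
    have hmain := hHedge π
    rw [← hw_def, ← hK_def] at hmain
    have heq : η * (T : ℝ) / D * (1 - w) + K / D = (η * (T : ℝ) * (1 - w) + K) / D := by
      ring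
    rw [heq, le_div_iff₀ hD] at hmain
    -- hmain : (T:ℝ)/2 * D ≤ η * T * (1 - w) + K
    have h1 : (1 + η) * ((T : ℝ) / 2 * D) ≤ (1 + η) * (η * (T : ℝ) * (1 - w) + K) :=
      mul_le_mul_of_nonneg_left hmain (by positivity)
    have h2 : (T : ℝ) / 2 * η ≤ (T : ℝ) / 2 * ((1 + η) * D) :=
      mul_le_mul_of_nonneg_left hB (by positivity)
    have h3 : (1 + η) * K ≤ (1 + η) * C := mul_le_mul_of_nonneg_left hK (by positivity)
    have hcomb : η * (T : ℝ) / 2 ≤ (1 + η) * (η * (T : ℝ) * (1 - w)) + (1 + η) * C := by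
      nlinarith [h1, h2, h3]
    have hdiv : (T : ℝ) / 2 ≤ (1 + η) * ((T : ℝ) * (1 - w)) + (1 + η) * s := by
      have h' : η * ((T : ℝ) / 2) ≤ η * ((1 + η) * ((T : ℝ) * (1 - w)) + (1 + η) * s) := by
        nlinarith [hcomb, hηs]
      exact le_of_mul_le_mul_left h' hη
    rw [← hss] at hdiv
    -- hdiv : s*s/2 ≤ (1+η)*((s*s)*(1-w)) + (1+η)*s
    have target' : w * s ≤ s / 2 + η * s / 2 + 1 := by
      nlinarith [hdiv, mul_pos (mul_pos hη hη) (mul_pos hs hs),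
        mul_pos (by positivity : (0:ℝ) < 1 + η) hs, hs, hη]
    have hstep : w - 1 / 2 ≤ (C / 2 + 1) / s := by
      rw [le_div_iff₀ hs]
      nlinarith [target', hηs]
    linarith
  rw [sub_le_iff_le_add]
  apply ciSup_le
  intro π
  rw [← sub_le_iff_le_add']
  apply le_ciInf
  intro π'
  have hπ := key π
  have hπ' := key π'
  have hrel : (C + 2) / s = 2 * ((C / 2 + 1) / s) := by ring
  linarith
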